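/- Let $k[G]$ be a finite separable field extension of a field $k$, let $R$ be a commutative $k$-algebra, and let $\phi: k[G] \to R[[\varpi]]$ be a $k$-algebra homomorphism. Then $\phi(k[G]) \subseteq R$, i.e., $\phi$ factors through the constants. -/

import Mathlib

/-- If `k[G]` is a finite separable field extension of `k`, `R` is a commutative
`k`-algebra, and `φ : k[G] → R[[ϖ]]` is a `k`-algebra homomorphism into the ring
of formal power series, then `φ` factors through the constants: the image of
every `f ∈ k[G]` is a constant power series. -/
theorem algHom_to_powerSeries_factors_through_constants {k kG R : Type*}
    [Field k] [Field kG] [Algebra k kG] [FiniteDimensional k kG]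
    [Algebra.IsSeparable k kG] [CommRing R] [Algebra k R]
    (φ : kG →ₐ[k] PowerSeries R) :
    ∀ f : kG, ∃ r : R, φ f = PowerSeries.C (R := R) r := by
  intro f
  classical
  set p := minpoly k f with hp
  have hsep : p.Separable := Algebra.IsSeparable.isSeparable k f
  obtain ⟨u, v, huv⟩ := hsep
  -- v(f) * p'(f) = 1 in kG
  have h1 : Polynomial.aeval f v * Polynomial.aeval f (Polynomial.derivative p) = 1 := by
    have := congrArg (Polynomial.aeval f) huv
    simpa [map_add, map_mul, hp, minpoly.aeval] using this
  set t : PowerSeries R := φ f with ht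
  set a : R := PowerSeries.constantCoeff (R := R) t with ha
  set ε : PowerSeries R := t - PowerSeries.C (R := R) a with hε
  have hεc : PowerSeries.constantCoeff (R := R) ε = 0 := by simp [hε, ha]
  -- q : polynomial over R
  set q : Polynomial R := p.map (algebraMap k R) with hq
  -- P : polynomial over PowerSeries R
  set P : Polynomial (PowerSeries R) := q.map (PowerSeries.C (R := R)) with hP
  have hPmap : P = p.map (algebraMap k (PowerSeries R)) := by
    rw [hP, hq, Polynomial.map_map]
    congr 1
    ext x
    simp [PowerSeries.algebraMap_apply]
  -- P.eval t = 0
  have haevalt : P.eval t = 0 := by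
    rw [hPmap, Polynomial.eval_map, ← Polynomial.aeval_def, ht,
      Polynomial.aeval_algHom_apply, hp, minpoly.aeval, map_zero]
  -- eval of mapped polys at constants
  have hevalC : ∀ w : Polynomial R, (w.map (PowerSeries.C (R := R))).eval (PowerSeries.C (R := R) a)
      = PowerSeries.C (R := R) (w.eval a) := by
    intro w
    rw [Polynomial.eval_map, Polynomial.eval₂_at_apply]
  -- constantCoeff of eval of mapped polys
  have hcc : ∀ w : Polynomial R, ∀ s : PowerSeries R,
      PowerSeries.constantCoeff (R := R) ((w.map (PowerSeries.C (R := R))).eval s)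
        = w.eval (PowerSeries.constantCoeff (R := R) s) := by
    intro w s
    rw [Polynomial.eval_map, Polynomial.hom_eval₂]
    have : (PowerSeries.constantCoeff (R := R)).comp (PowerSeries.C (R := R)) = RingHom.id R := by
      ext x; simp
    rw [this]; rfl
  -- binomial expansion
  obtain ⟨c, hc⟩ := P.binomExpansion (PowerSeries.C (R := R) a) ε
  have hsum : PowerSeries.C (R := R) a + ε = t := by rw [hε]; ring
  rw [hsum, haevalt] at hc
  -- P.eval (C a) = C (q.eval a) and q.eval a = 0
  have hqa : q.eval a = 0 := by
    have := hcc q t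
    rw [← hP, haevalt, map_zero] at this
    exact this.symm
  have hPCa : P.eval (PowerSeries.C (R := R) a) = 0 := by
    rw [hP, hevalC, hqa, map_zero]
  -- derivative
  have hPder : Polynomial.derivative P = q.derivative.map (PowerSeries.C (R := R)) := by
    rw [hP, Polynomial.derivative_map]
  have hder0 : (Polynomial.derivative P).eval (PowerSeries.C (R := R) a)
      = PowerSeries.C (R := R) (q.derivative.eval a) := by
    rw [hPder, hevalC]
  rw [hPCa, hder0, zero_add] at hc
  -- q'.eval a is a unit
  have hunit : IsUnit (q.derivative.eval a) := by
    have h2 := congrArg φ h1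
    rw [map_mul, map_one] at h2
    have hPder' : Polynomial.derivative P
        = (Polynomial.derivative p).map (algebraMap k (PowerSeries R)) := by
      rw [hPmap, Polynomial.derivative_map]
    have h3 : φ (Polynomial.aeval f (Polynomial.derivative p))
        = (Polynomial.derivative P).eval t := by
      rw [← Polynomial.aeval_algHom_apply, hPder', Polynomial.eval_map, Polynomial.aeval_def]
    have h4 := congrArg (PowerSeries.constantCoeff (R := R)) h2
    rw [map_mul, map_one] at h4
    have h5 : PowerSeries.constantCoeff (R := R) ((Polynomial.derivative P).eval t)
        = q.derivative.eval a := by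
      rw [hPder, hcc, ha]
    exact IsUnit.of_mul_eq_one _ (by rw [← h5, ← h3, mul_comm]; exact h4)
  -- the cofactor is a unit
  have hcof : IsUnit (PowerSeries.C (R := R) (q.derivative.eval a) + c * ε) := by
    rw [PowerSeries.isUnit_iff_constantCoeff]
    simpa [hεc] using hunit
  -- conclude ε = 0
  have hfact : ε * (PowerSeries.C (R := R) (q.derivative.eval a) + c * ε) = 0 := by
    linear_combination -hc
  have hε0 : ε = 0 := by
    obtain ⟨w, hw⟩ := hcof
    have := congrArg (· * (↑w⁻¹ : PowerSeries R)) hfact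
    simpa [← hw, mul_assoc] using this
  refine ⟨a, ?_⟩
  have : t = PowerSeries.C (R := R) a := by
    have := hε0
    rw [hε, sub_eq_zero] at this
    exact this
  exact this
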